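/- Let T = cS, where c ∈ (Σ ∪ Π)∖{$} and S is a p-string of length n ≥ 1 ending with $, with $ occurring nowhere else in S, and let k_T = RA_T⁻¹[n+1]. Then LCP∞_T[i] = LCP∞_S[i] for all i < k_T − 1, and LCP∞_T[i] = LCP∞_S[i−1] for all i > k_T. -/

import Mathlib

/-! Common framework: parameterized strings over static alphabet `σ` and
parameter alphabet `π`.  A p-string is a `List (σ ⊕ π)`. -/

variable {σ π : Type*}

instance instInhabSum [Inhabited σ] : Inhabited (σ ⊕ π) := ⟨Sum.inl default⟩

/-- one right rotation: the last character moves to the front -/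
def rotR1 {α : Type*} (W : List α) : List α := W.rotate (W.length - 1)

/-- `rotR W i` is the `i`-th right rotation `Rot(W, i)` -/
def rotR {α : Type*} (W : List α) : ℕ → List α
  | 0 => W
  | i + 1 => rotR1 (rotR W i)

/-- 1-based access `W[i]` (junk default outside the range) -/
def get1 {α : Type*} [Inhabited α] (W : List α) (i : ℕ) : α := W.getD (i - 1) default

/-- the prev-encoding `⟨T⟩`, a list over `σ ⊕ ℕ∞` -/
def prevEnc [DecidableEq σ] [DecidableEq π] (T : List (σ ⊕ π)) : List (σ ⊕ ℕ∞) :=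
  (List.range T.length).map fun k =>
    match T[k]? with
    | none => Sum.inr ⊤
    | some (Sum.inl a) => Sum.inl a
    | some (Sum.inr b) =>
      match ((List.range k).filter fun j => T[j]? = some (Sum.inr b)).max? with
      | none => Sum.inr ⊤
      | some j => Sum.inr ((k - j : ℕ) : ℕ∞)

/-- number of distinct parameter characters occurring in `W` -/
def distinctParams [DecidableEq π] (W : List (σ ⊕ π)) : ℕ :=
  (W.filterMap Sum.getRight?).dedup.length

/-- the encoding `⟦T⟧`, a list over `σ ⊕ ℕ`:  a static character is kept; a
parameter character at (1-based) position `i` is replaced by the number of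
distinct parameter characters in `Rot(T, n-i)[1:ℓ]` where `ℓ` is the leftmost
occurrence position of `T[i]` in `Rot(T, n-i)`. -/
def encodeE [DecidableEq σ] [DecidableEq π] (T : List (σ ⊕ π)) : List (σ ⊕ ℕ) :=
  (List.range T.length).map fun k =>
    match T[k]? with
    | none => Sum.inr 0
    | some (Sum.inl a) => Sum.inl a
    | some (Sum.inr b) =>
      let R := rotR T (T.length - (k + 1))
      Sum.inr (distinctParams (R.take (R.idxOf (Sum.inr b) + 1)))

/-- order on prev-encoding characters: every static character is smaller than
every element of `ℕ∞` (and `ℕ∞` carries its usual order with `∞` on top) -/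
def pvlt [LT σ] : (σ ⊕ ℕ∞) → (σ ⊕ ℕ∞) → Prop
  | Sum.inl a, Sum.inl b => a < b
  | Sum.inl _, Sum.inr _ => True
  | Sum.inr _, Sum.inl _ => False
  | Sum.inr x, Sum.inr y => x < y

/-- `T` is a p-string of length ≥ 1 ending with the static character `d`,
which occurs nowhere else in `T`. -/
def EndsWith [DecidableEq σ] [DecidableEq π] (T : List (σ ⊕ π)) (d : σ) : Prop :=
  1 ≤ T.length ∧ T.getLast? = some (Sum.inl d) ∧ T.count (Sum.inl d) = 1

/-- `RA` represents the parameterized rotation array `RA_T` (0-based indices: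
`RA_T[i] = (RA ⟨i-1⟩).val + 1`): the prev-encodings of the rotations are listed
in strictly increasing lexicographic order. -/
def IsRA [LinearOrder σ] [DecidableEq π] (T : List (σ ⊕ π))
    (RA : Fin T.length ≃ Fin T.length) : Prop :=
  ∀ i j : Fin T.length, i < j →
    List.Lex pvlt (prevEnc (rotR T ((RA i).val + 1))) (prevEnc (rotR T ((RA j).val + 1)))

/-- `LF` represents the LF mapping: `LF_T(i) = j` iff `T_{RA_T[i]+1} = T_{RA_T[j]}`. -/
def IsLF [LinearOrder σ] [DecidableEq π] (T : List (σ ⊕ π))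
    (RA LF : Fin T.length ≃ Fin T.length) : Prop :=
  ∀ i : Fin T.length, rotR T ((RA i).val + 2) = rotR T ((RA (LF i)).val + 1)

/-- the pBWT array `L_T[i] = ⟦T_{RA_T[i]}⟧[n]` -/
def Larr [LinearOrder σ] [DecidableEq π] [Inhabited σ] (T : List (σ ⊕ π))
    (RA : Fin T.length ≃ Fin T.length) (i : Fin T.length) : σ ⊕ ℕ :=
  get1 (encodeE (rotR T ((RA i).val + 1))) T.length

/-- the array `F_T[i] = ⟦T_{RA_T[i]}⟧[1]` -/
def Farr [LinearOrder σ] [DecidableEq π] [Inhabited σ] (T : List (σ ⊕ π))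
    (RA : Fin T.length ≃ Fin T.length) (i : Fin T.length) : σ ⊕ ℕ :=
  get1 (encodeE (rotR T ((RA i).val + 1))) 1

/-- longest common prefix of two lists -/
def lcp {α : Type*} [DecidableEq α] : List α → List α → List α
  | a :: as, b :: bs => if a = b then a :: lcp as bs else []
  | _, _ => []

/-- `lcp∞(X, Y)`: the number of `∞`'s in the longest common prefix of `X` and `Y` -/
def lcpInf [DecidableEq σ] (X Y : List (σ ⊕ ℕ∞)) : ℕ :=
  (lcp X Y).count (Sum.inr ⊤)

/-- the `∞`-LCP array (1-based): `LCP∞_T[i] = lcp∞(⟨T_{RA_T[i]}⟩, ⟨T_{RA_T[i+1]}⟩)`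
for `1 ≤ i < n`, and `0` otherwise. -/
def LCPa [LinearOrder σ] [DecidableEq π] (T : List (σ ⊕ π))
    (RA : Fin T.length ≃ Fin T.length) (i : ℕ) : ℕ :=
  if h : 1 ≤ i ∧ i < T.length then
    lcpInf (prevEnc (rotR T ((RA ⟨i - 1, by omega⟩).val + 1)))
           (prevEnc (rotR T ((RA ⟨i, h.2⟩).val + 1)))
  else 0

/-- parameterized match: a bijection on `σ ⊕ π` fixing all static characters
renames `S` into `T` -/
def PMatch (S T : List (σ ⊕ π)) : Prop :=
  ∃ f : (σ ⊕ π) ≃ (σ ⊕ π), (∀ a : σ, f (Sum.inl a) = Sum.inl a) ∧ S.map f = T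

/-- leftmost (1-based) occurrence position of `c` in `W`, `0` if absent -/
def leftPos [DecidableEq σ] [DecidableEq π] (W : List (σ ⊕ π)) (c : σ ⊕ π) : ℕ :=
  if W.contains c then W.idxOf c + 1 else 0

/-- rightmost (1-based) occurrence position of `c` in `W`, `0` if absent -/
def rightPos [DecidableEq σ] [DecidableEq π] (W : List (σ ⊕ π)) (c : σ ⊕ π) : ℕ :=
  if W.contains c then W.length - W.reverse.idxOf c else 0


section Helpers
variable {α : Type*}

theorem rotR_eq_rotate (W : List α) (i : ℕ) :
    rotR W i = W.rotate (i * (W.length - 1)) := by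
  induction i with
  | zero => simp [rotR]
  | succ i ih =>
    simp only [rotR, ih, rotR1, List.length_rotate, List.rotate_rotate]
    ring_nf

theorem rotR_formula (W : List α) (p : ℕ) (h1 : 1 ≤ p) (h2 : p ≤ W.length) :
    rotR W p = W.drop (W.length - p) ++ W.take (W.length - p) := by
  rw [rotR_eq_rotate]
  have hmod : (p * (W.length - 1)) % W.length = W.length - p := by
    obtain ⟨q, rfl⟩ : ∃ q, p = q + 1 := ⟨p - 1, by omega⟩
    obtain ⟨m, hm⟩ : ∃ m, W.length = q + 1 + m := ⟨W.length - (q+1), by omega⟩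
    have key : (q+1) * (W.length - 1) = q * W.length + (W.length - (q+1)) := by
      have e1 : q + 1 + m - 1 = q + m := by omega
      have e2 : q + 1 + m - (q+1) = m := by omega
      rw [hm, e1, e2]; ring
    rw [key, Nat.mul_add_mod']
    exact Nat.mod_eq_of_lt (by omega)
  rw [← List.rotate_mod, hmod, List.rotate_eq_drop_append_take (by omega)]

theorem lcp_take_eq [DecidableEq α] :
    ∀ (m : ℕ) (X Y : List α), (∃ k, k < m ∧ X[k]? ≠ Y[k]?) →
      lcp X Y = lcp (X.take m) (Y.take m)
  | 0, _, _, ⟨k, hk, _⟩ => absurd hk (by omega)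
  | m + 1, [], Y, _ => by cases Y <;> simp [lcp]
  | m + 1, a :: as, [], _ => by simp [lcp]
  | m + 1, a :: as, b :: bs, ⟨k, hk, hne⟩ => by
    by_cases hab : a = b
    · subst hab
      have hk0 : k ≠ 0 := by rintro rfl; simp at hne
      have := lcp_take_eq m as bs ⟨k - 1, by omega, by
        have h1 : (a :: as)[k]? = as[k-1]? := by
          cases k with | zero => omega | succ k' => simp
        have h2 : (a :: bs)[k]? = bs[k-1]? := by
          cases k with | zero => omega | succ k' => simp
        rw [h1] at hne; rw [h2] at hne; exact hne⟩
      simp [lcp, this]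
    · simp [lcp, hab]

theorem lex_take_iff {r : α → α → Prop} (hirr : ∀ x, ¬ r x x) :
    ∀ (m : ℕ) (X Y : List α), (∃ k, k < m ∧ X[k]? ≠ Y[k]?) →
      (List.Lex r X Y ↔ List.Lex r (X.take m) (Y.take m))
  | 0, _, _, ⟨k, hk, _⟩ => absurd hk (by omega)
  | m + 1, [], Y, ⟨k, hk, hne⟩ => by
    cases Y with
    | nil => simp at hne
    | cons b bs =>
      simp only [List.take_nil, List.take]
      exact ⟨fun _ => List.Lex.nil, fun _ => List.Lex.nil⟩
  | m + 1, a :: as, [], _ => by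
    simp only [List.take_nil, List.take]
    exact ⟨fun h => absurd h List.not_lex_nil,
           fun h => absurd h List.not_lex_nil⟩
  | m + 1, a :: as, b :: bs, ⟨k, hk, hne⟩ => by
    by_cases hab : a = b
    · subst hab
      have hk0 : k ≠ 0 := by rintro rfl; simp at hne
      have ih := lex_take_iff (r := r) hirr m as bs ⟨k - 1, by omega, by
        have h1 : (a :: as)[k]? = as[k-1]? := by
          cases k with | zero => omega | succ k' => simp
        have h2 : (a :: bs)[k]? = bs[k-1]? := by
          cases k with | zero => omega | succ k' => simp
        rw [h1] at hne; rw [h2] at hne; exact hne⟩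
      simp only [List.take]
      constructor
      · intro h
        cases h with
        | cons h' => exact List.Lex.cons (ih.mp h')
        | rel h' => exact absurd h' (hirr a)
      · intro h
        cases h with
        | cons h' => exact List.Lex.cons (ih.mpr h')
        | rel h' => exact absurd h' (hirr a)
    · simp only [List.take]
      constructor
      · intro h
        cases h with
        | cons h' => exact absurd rfl hab
        | rel h' => exact List.Lex.rel h'
      · intro h
        cases h with
        | cons h' => exact absurd rfl hab
        | rel h' => exact List.Lex.rel h'

theorem lex_asymm {r : α → α → Prop} (hr : ∀ x y, r x y → ¬ r y x) :
    ∀ {X Y : List α}, List.Lex r X Y → ¬ List.Lex r Y X := by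
  intro X Y h
  induction h with
  | nil => intro h2; cases h2
  | @cons a as bs h ih => intro h2; cases h2 with
    | cons h' => exact ih h'
    | rel h' => exact hr _ _ h' h'
  | @rel a as b bs h => intro h2; cases h2 with
    | cons h' => exact hr _ _ h h
    | rel h' => exact hr _ _ h h'

end Helpers

section Helpers2
set_option linter.unusedSectionVars false
variable {σ π : Type*} [DecidableEq σ] [DecidableEq π]

theorem prevEnc_get?_some (X : List (σ ⊕ π)) (k : ℕ) (hk : k < X.length) :
    (prevEnc X)[k]? = some (
      match X[k]? with
      | none => Sum.inr ⊤
      | some (Sum.inl a) => Sum.inl a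
      | some (Sum.inr b) =>
        match ((List.range k).filter fun j => X[j]? = some (Sum.inr b)).max? with
        | none => Sum.inr ⊤
        | some j => Sum.inr ((k - j : ℕ) : ℕ∞)) := by
  rw [prevEnc, List.getElem?_map, List.getElem?_range hk]; rfl

theorem prevEnc_length (X : List (σ ⊕ π)) : (prevEnc X).length = X.length := by
  simp [prevEnc]

theorem prevEnc_inl_iff (X : List (σ ⊕ π)) (k : ℕ) (hk : k < X.length) (a : σ) :
    (prevEnc X)[k]? = some (Sum.inl a) ↔ X[k]? = some (Sum.inl a) := by
  rw [prevEnc_get?_some X k hk]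
  rcases hx : X[k]? with _ | (a' | b)
  · exact absurd hx (by rw [List.getElem?_eq_none_iff]; omega)
  · simp only [hx, Option.some.injEq, Sum.inl.injEq]
  · simp only [hx]
    rcases hm : ((List.range k).filter fun j => X[j]? = some (Sum.inr b)).max? with _ | j <;>
      simp [hm]

theorem prevEnc_take (X Y : List (σ ⊕ π)) (m : ℕ) (h : X.take m = Y.take m) :
    (prevEnc X).take m = (prevEnc Y).take m := by
  have hget : ∀ j, j < m → X[j]? = Y[j]? := by
    intro j hj
    have h1 : (X.take m)[j]? = X[j]? := List.getElem?_take_of_lt hj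
    have h2 : (Y.take m)[j]? = Y[j]? := List.getElem?_take_of_lt hj
    rw [← h1, ← h2, h]
  have hlen : min m X.length = min m Y.length := by
    have := congrArg List.length h
    simpa using this
  apply List.ext_getElem?
  intro k
  rcases lt_or_ge k m with hkm | hkm
  · rcases lt_or_ge k X.length with hkX | hkX
    · have hkY : k < Y.length := by omega
      rw [List.getElem?_take_of_lt hkm, List.getElem?_take_of_lt hkm,
          prevEnc_get?_some X k hkX, prevEnc_get?_some Y k hkY]
      have hXk := hget k hkm
      have hfilter : ∀ b : π,
          ((List.range k).filter fun j => X[j]? = some (Sum.inr b)) =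
          ((List.range k).filter fun j => Y[j]? = some (Sum.inr b)) := by
        intro b
        apply List.filter_congr
        intro j hj
        rw [hget j (lt_of_lt_of_le (List.mem_range.mp hj) (le_of_lt hkm))]
      rw [hXk]
      rcases hx : Y[k]? with _ | (a' | b)
      · rfl
      · rfl
      · simp only [hfilter b]
    · have hkY : Y.length ≤ k := by omega
      rw [List.getElem?_take_of_lt hkm, List.getElem?_take_of_lt hkm, List.getElem?_eq_none_iff.mpr, List.getElem?_eq_none_iff.mpr]
      · rw [prevEnc_length]; omega
      · rw [prevEnc_length]; omega
  · rw [List.getElem?_eq_none_iff.mpr, List.getElem?_eq_none_iff.mpr] <;>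
      (simp [List.length_take, prevEnc_length]; omega)

theorem pvlt_irrefl [LinearOrder σ] (x : σ ⊕ ℕ∞) : ¬ pvlt x x := by
  cases x <;> simp [pvlt]

theorem pvlt_asymm [LinearOrder σ] : ∀ (x y : σ ⊕ ℕ∞), pvlt x y → ¬ pvlt y x
  | Sum.inl a, Sum.inl b, h => lt_asymm (show a < b from h)
  | Sum.inl _, Sum.inr _, _ => fun h2 => h2
  | Sum.inr _, Sum.inl _, h => h.elim
  | Sum.inr x, Sum.inr y, h => lt_asymm (show x < y from h)

end Helpers2

section Helpers3
set_option linter.unusedSectionVars false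
variable {σ π : Type*} [LinearOrder σ] [DecidableEq π]
variable {d : σ} {S : List (σ ⊕ π)} {c : σ ⊕ π}


instance sumLawfulBEq {σ π : Type*} [DecidableEq σ] [DecidableEq π] : LawfulBEq (σ ⊕ π) := by
  refine { rfl := ?_, eq_of_beq := ?_ }
  · intro a
    rcases a with x | x
    · exact beq_self_eq_true x
    · exact beq_self_eq_true x
  · intro a b h
    cases a <;> cases b
    · exact congrArg Sum.inl (eq_of_beq h)
    · exact Bool.noConfusion h
    · exact Bool.noConfusion h
    · exact congrArg Sum.inr (eq_of_beq h)

theorem rotR_length {α : Type*} (W : List α) (i : ℕ) : (rotR W i).length = W.length := by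
  rw [rotR_eq_rotate, List.length_rotate]

theorem ends_last (hS : EndsWith S d) : S[S.length - 1]? = some (Sum.inl d) := by
  have := hS.2.1
  rwa [List.getLast?_eq_getElem?] at this

theorem ends_notd (hS : EndsWith S d) : ∀ j, j < S.length - 1 → S[j]? ≠ some (Sum.inl d) := by
  intro j hj hcon
  have hmem : Sum.inl d ∈ S.drop (S.length - 1) :=
    List.mem_of_getElem? (by rw [List.getElem?_drop, Nat.add_zero]; exact ends_last hS)
  have hmem2 : Sum.inl d ∈ S.take (S.length - 1) :=
    List.mem_of_getElem? (by rwa [List.getElem?_take_of_lt hj])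
  have hone := hS.2.2
  have hcount : S.count (Sum.inl d) =
      (S.take (S.length - 1)).count (Sum.inl d) + (S.drop (S.length - 1)).count (Sum.inl d) := by
    rw [← List.count_append, List.take_append_drop]
  have h1 : 0 < (S.take (S.length - 1)).count (Sum.inl d) := by exact List.count_pos_iff.mpr hmem2
  have h2 : 0 < (S.drop (S.length - 1)).count (Sum.inl d) := by exact List.count_pos_iff.mpr hmem
  omega

theorem rotS_eq (p : ℕ) (h1 : 1 ≤ p) (h2 : p ≤ S.length) :
    rotR S p = S.drop (S.length - p) ++ S.take (S.length - p) :=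
  rotR_formula S p h1 h2

theorem rotT_eq (p : ℕ) (h1 : 1 ≤ p) (h2 : p ≤ S.length) :
    rotR (c :: S) p = S.drop (S.length - p) ++ c :: S.take (S.length - p) := by
  have := rotR_formula (c :: S) p h1 (by simp; omega)
  rw [this]
  have he : (c :: S).length - p = (S.length - p) + 1 := by simp; omega
  rw [he, List.drop_succ_cons, List.take_succ_cons]

theorem rotT_top : rotR (c :: S) (S.length + 1) = c :: S := by
  have := rotR_formula (c :: S) (S.length + 1) (by omega) (by simp)
  simpa using this

theorem takeTS (p : ℕ) (h1 : 1 ≤ p) (h2 : p ≤ S.length) :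
    (rotR (c :: S) p).take p = (rotR S p).take p := by
  rw [rotT_eq p h1 h2, rotS_eq p h1 h2]
  have hl : (S.drop (S.length - p)).length = p := by simp; omega
  rw [List.take_append_of_le_length (le_of_eq hl.symm), List.take_append_of_le_length (le_of_eq hl.symm)]

theorem getS_rot (p : ℕ) (h1 : 1 ≤ p) (h2 : p ≤ S.length) (i : ℕ) (hi : i < p) :
    (rotR S p)[i]? = S[S.length - p + i]? := by
  rw [rotS_eq p h1 h2, List.getElem?_append_left (by simp; omega), List.getElem?_drop]

theorem getT_rot (p : ℕ) (h1 : 1 ≤ p) (h2 : p ≤ S.length) (i : ℕ) (hi : i < p) :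
    (rotR (c :: S) p)[i]? = S[S.length - p + i]? := by
  rw [rotT_eq p h1 h2, List.getElem?_append_left (by simp; omega), List.getElem?_drop]

theorem dollarT (hS : EndsWith S d) (p : ℕ) (h1 : 1 ≤ p) (h2 : p ≤ S.length) :
    (rotR (c :: S) p)[p-1]? = some (Sum.inl d) := by
  rw [getT_rot p h1 h2 (p-1) (by omega)]
  have : S.length - p + (p - 1) = S.length - 1 := by omega
  rw [this]; exact ends_last hS

theorem dollarS (hS : EndsWith S d) (p : ℕ) (h1 : 1 ≤ p) (h2 : p ≤ S.length) :
    (rotR S p)[p-1]? = some (Sum.inl d) := by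
  rw [getS_rot p h1 h2 (p-1) (by omega)]
  have : S.length - p + (p - 1) = S.length - 1 := by omega
  rw [this]; exact ends_last hS

theorem notdollarT (hS : EndsWith S d) (hc : c ≠ Sum.inl d) (p q : ℕ)
    (h1 : 1 ≤ p) (h2 : p < q) (h3 : q ≤ S.length + 1) :
    (rotR (c :: S) q)[p-1]? ≠ some (Sum.inl d) := by
  rcases eq_or_lt_of_le h3 with hq | hq
  · rw [hq, rotT_top]
    rcases Nat.eq_or_lt_of_le h1 with hp | hp
    · have : p - 1 = 0 := by omega
      rw [this]
      simpa using hc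
    · have : (c :: S)[p-1]? = S[p-2]? := by
        have : p - 1 = (p-2) + 1 := by omega
        rw [this, List.getElem?_cons_succ]
      rw [this]
      exact ends_notd hS (p-2) (by omega)
  · rw [getT_rot q (by omega) (by omega) (p-1) (by omega)]
    exact ends_notd hS _ (by omega)

theorem notdollarS (hS : EndsWith S d) (p q : ℕ)
    (h1 : 1 ≤ p) (h2 : p < q) (h3 : q ≤ S.length) :
    (rotR S q)[p-1]? ≠ some (Sum.inl d) := by
  rw [getS_rot q (by omega) h3 (p-1) (by omega)]
  exact ends_notd hS _ (by omega)

theorem diffT (hS : EndsWith S d) (hc : c ≠ Sum.inl d) (p q : ℕ)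
    (h1 : 1 ≤ p) (h2 : p < q) (h3 : q ≤ S.length + 1) :
    (prevEnc (rotR (c :: S) p))[p-1]? ≠ (prevEnc (rotR (c :: S) q))[p-1]? := by
  intro hcon
  have hlp : p - 1 < (rotR (c :: S) p).length := by rw [rotR_length]; simp; omega
  have hlq : p - 1 < (rotR (c :: S) q).length := by rw [rotR_length]; simp; omega
  have hL : (prevEnc (rotR (c :: S) p))[p-1]? = some (Sum.inl d) :=
    (prevEnc_inl_iff _ _ hlp d).mpr (dollarT hS p h1 (by omega))
  rw [hcon] at hL
  exact notdollarT hS hc p q h1 h2 h3 ((prevEnc_inl_iff _ _ hlq d).mp hL)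

theorem diffS (hS : EndsWith S d) (p q : ℕ)
    (h1 : 1 ≤ p) (h2 : p < q) (h3 : q ≤ S.length) :
    (prevEnc (rotR S p))[p-1]? ≠ (prevEnc (rotR S q))[p-1]? := by
  intro hcon
  have hlp : p - 1 < (rotR S p).length := by rw [rotR_length]; omega
  have hlq : p - 1 < (rotR S q).length := by rw [rotR_length]; omega
  have hL : (prevEnc (rotR S p))[p-1]? = some (Sum.inl d) :=
    (prevEnc_inl_iff _ _ hlp d).mpr (dollarS hS p h1 (by omega))
  rw [hcon] at hL
  exact notdollarS hS p q h1 h2 h3 ((prevEnc_inl_iff _ _ hlq d).mp hL)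

theorem prevEnc_take_TS (p m : ℕ) (h1 : 1 ≤ p) (h2 : p ≤ S.length) (hm : m ≤ p) :
    (prevEnc (rotR (c :: S) p)).take m = (prevEnc (rotR S p)).take m := by
  apply prevEnc_take
  have := takeTS (c := c) p h1 h2
  calc (rotR (c :: S) p).take m = ((rotR (c :: S) p).take p).take m := by
        rw [List.take_take, min_eq_left hm]
    _ = ((rotR S p).take p).take m := by rw [this]
    _ = (rotR S p).take m := by rw [List.take_take, min_eq_left hm]

theorem lexTS (hS : EndsWith S d) (hc : c ≠ Sum.inl d) (p q : ℕ)
    (h1 : 1 ≤ p) (h1' : 1 ≤ q) (h2 : p ≤ S.length) (h2' : q ≤ S.length) (hpq : p ≠ q) :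
    (List.Lex pvlt (prevEnc (rotR (c :: S) p)) (prevEnc (rotR (c :: S) q)) ↔
     List.Lex pvlt (prevEnc (rotR S p)) (prevEnc (rotR S q))) := by
  set m := min p q with hm
  have hwT : ∃ k, k < m ∧ (prevEnc (rotR (c :: S) p))[k]? ≠ (prevEnc (rotR (c :: S) q))[k]? := by
    rcases lt_or_gt_of_ne hpq with h | h
    · exact ⟨p - 1, by omega, diffT hS hc p q h1 h (by omega)⟩
    · exact ⟨q - 1, by omega, fun hcc => diffT hS hc q p h1' h (by omega) hcc.symm⟩
  have hwS : ∃ k, k < m ∧ (prevEnc (rotR S p))[k]? ≠ (prevEnc (rotR S q))[k]? := by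
    rcases lt_or_gt_of_ne hpq with h | h
    · exact ⟨p - 1, by omega, diffS hS p q h1 h h2'⟩
    · exact ⟨q - 1, by omega, fun hcc => diffS hS q p h1' h h2 hcc.symm⟩
  rw [lex_take_iff pvlt_irrefl m _ _ hwT, lex_take_iff pvlt_irrefl m _ _ hwS,
      prevEnc_take_TS p m h1 h2 (by omega), prevEnc_take_TS q m h1' h2' (by omega)]

theorem lcpTS (hS : EndsWith S d) (hc : c ≠ Sum.inl d) (p q : ℕ)
    (h1 : 1 ≤ p) (h1' : 1 ≤ q) (h2 : p ≤ S.length) (h2' : q ≤ S.length) (hpq : p ≠ q) :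
    lcpInf (prevEnc (rotR (c :: S) p)) (prevEnc (rotR (c :: S) q)) =
    lcpInf (prevEnc (rotR S p)) (prevEnc (rotR S q)) := by
  set m := min p q with hm
  have hwT : ∃ k, k < m ∧ (prevEnc (rotR (c :: S) p))[k]? ≠ (prevEnc (rotR (c :: S) q))[k]? := by
    rcases lt_or_gt_of_ne hpq with h | h
    · exact ⟨p - 1, by omega, diffT hS hc p q h1 h (by omega)⟩
    · exact ⟨q - 1, by omega, fun hcc => diffT hS hc q p h1' h (by omega) hcc.symm⟩
  have hwS : ∃ k, k < m ∧ (prevEnc (rotR S p))[k]? ≠ (prevEnc (rotR S q))[k]? := by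
    rcases lt_or_gt_of_ne hpq with h | h
    · exact ⟨p - 1, by omega, diffS hS p q h1 h h2'⟩
    · exact ⟨q - 1, by omega, fun hcc => diffS hS q p h1' h h2 hcc.symm⟩
  unfold lcpInf
  rw [lcp_take_eq m _ _ hwT, lcp_take_eq m _ _ hwS,
      prevEnc_take_TS p m h1 h2 (by omega), prevEnc_take_TS q m h1' h2' (by omega)]

end Helpers3

theorem skip_lemma (n k : ℕ) (f : ℕ → ℕ) (hk : k ≤ n)
    (hub : ∀ i, i < n → f i < n + 1)
    (hmono : ∀ i j, i < j → j < n → f i < f j)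
    (hne : ∀ i, i < n → f i ≠ k) :
    ∀ i, i < n → f i = if i < k then i else i + 1 := by
  have hsum : ∀ d i, i + d < n → f i + d ≤ f (i + d) := by
    intro d
    induction d with
    | zero => intro i _; simp
    | succ d ih =>
      intro i hi
      have h1 := ih i (by omega)
      have h2 := hmono (i + d) (i + d + 1) (by omega) (by omega)
      have : i + (d+1) = i + d + 1 := by omega
      rw [this]; omega
  have hlow : ∀ i, i < n → i ≤ f i := by
    intro i hi
    have := hsum i 0 (by omega)
    simp at this
    omega
  have hupp : ∀ i, i < n → f i ≤ i + 1 := by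
    intro i hi
    have h1 := hsum (n - 1 - i) i (by omega)
    have h2 := hub (i + (n - 1 - i)) (by omega)
    omega
  have hhigh : ∀ j, k ≤ j → j < n → f j = j + 1 := by
    intro j
    induction j with
    | zero => intro h1 h2; have := hne 0 h2; have := hlow 0 h2; have := hupp 0 h2; omega
    | succ j ih =>
      intro h1 h2
      rcases Nat.lt_or_ge j k with hjk | hjk
      · have hk1 : k = j + 1 := by omega
        have := hne (j+1) h2; have := hlow (j+1) h2; have := hupp (j+1) h2; omega
      · have := ih hjk (by omega)
        have := hmono j (j+1) (by omega) h2
        have := hupp (j+1) h2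
        omega
  have hlowm : ∀ m, m < k → f (k - 1 - m) = k - 1 - m := by
    intro m
    induction m with
    | zero =>
      intro h
      have h1 : k - 1 - 0 = k - 1 := by omega
      rw [h1]
      have := hne (k-1) (by omega); have := hlow (k-1) (by omega); have := hupp (k-1) (by omega)
      omega
    | succ m ih =>
      intro h
      have h1 := ih (by omega)
      have h2 := hmono (k - 1 - (m+1)) (k - 1 - m) (by omega) (by omega)
      have := hlow (k - 1 - (m+1)) (by omega)
      omega
  intro i hi
  rcases Nat.lt_or_ge i k with hik | hik
  · have := hlowm (k - 1 - i) (by omega)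
    have he : k - 1 - (k - 1 - i) = i := by omega
    rw [he] at this
    rw [this, if_pos hik]
  · have := hhigh i hik hi
    rw [this, if_neg (by omega)]
/-- Let `T = cS` with `c ∈ (Σ ∪ Π) ∖ {$}` and
`k_T = RA_T⁻¹[n+1]` (1-based; here `kT.val + 1 = k_T`).  Then
`LCP∞_T[i] = LCP∞_S[i]` for all `i < k_T - 1`, and `LCP∞_T[i] = LCP∞_S[i-1]`
for all `i > k_T`. -/
theorem LCPa_insert [LinearOrder σ] [DecidableEq π]
    (d : σ) (hd : ∀ a : σ, d ≤ a)
    (S : List (σ ⊕ π)) (hS : EndsWith S d)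
    (c : σ ⊕ π) (hc : c ≠ Sum.inl d)
    (RAS : Fin S.length ≃ Fin S.length) (hRAS : IsRA S RAS)
    (RAT : Fin (c :: S).length ≃ Fin (c :: S).length) (hRAT : IsRA (c :: S) RAT)
    (kT : Fin (c :: S).length) (hkT : (RAT kT).val + 1 = S.length + 1) :
    ∀ i : ℕ, 1 ≤ i →
      (i < kT.val → LCPa (c :: S) RAT i = LCPa S RAS i) ∧
      (kT.val + 1 < i → LCPa (c :: S) RAT i = LCPa S RAS (i - 1)) := by
  have hn1 : 1 ≤ S.length := hS.1
  have hkTlt : kT.val < S.length + 1 := by have := kT.isLt; simpa using this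
  have hkTn : (RAT kT).val = S.length := by omega
  have hkTle : kT.val ≤ S.length := by omega
  let e : Fin S.length → Fin (c :: S).length := fun i =>
    RAT.symm ⟨(RAS i).val, by have := (RAS i).isLt; simp⟩
  have hRATe : ∀ i : Fin S.length, (RAT (e i)).val = (RAS i).val := by
    intro i
    simp only [e, Equiv.apply_symm_apply]
  have lexT : ∀ i j : Fin (c :: S).length,
      List.Lex pvlt (prevEnc (rotR (c :: S) ((RAT i).val + 1)))
        (prevEnc (rotR (c :: S) ((RAT j).val + 1))) → i < j := by
    intro i j hlex
    rcases lt_trichotomy i j with h | h | h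
    · exact h
    · subst h; exact absurd hlex (lex_asymm pvlt_asymm hlex)
    · exact absurd (hRAT j i h) (lex_asymm pvlt_asymm hlex)
  have hmono : ∀ i j : Fin S.length, i < j → e i < e j := by
    intro i j hij
    have hps : (RAS i).val ≠ (RAS j).val := by
      intro hcon
      have h2 := RAS.injective (Fin.ext hcon)
      rw [h2] at hij
      exact lt_irrefl _ hij
    have hlexS := hRAS i j hij
    have hlexT := (lexTS hS hc ((RAS i).val + 1) ((RAS j).val + 1) (by omega) (by omega)
        ((RAS i).isLt) ((RAS j).isLt) (by omega)).mpr hlexS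
    apply lexT
    rw [hRATe i, hRATe j]
    exact hlexT
  have hmne : ∀ i : Fin S.length, (e i).val ≠ kT.val := by
    intro i hcon
    have h1 := hRATe i
    have h2 : e i = kT := Fin.ext hcon
    rw [h2, hkTn] at h1
    have := (RAS i).isLt
    omega
  have heN : ∀ i (h : i < S.length),
      (fun i => if h : i < S.length then (e ⟨i, h⟩).val else 0) i = (e ⟨i, h⟩).val :=
    fun i h => dif_pos h
  have hcorr := skip_lemma S.length kT.val
    (fun i => if h : i < S.length then (e ⟨i, h⟩).val else 0) hkTle
    (by intro i hi
        rw [dif_pos hi]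
        have := (e ⟨i, hi⟩).isLt
        simpa using this)
    (by intro i j hij hj
        rw [dif_pos (show i < S.length by omega), dif_pos hj]
        exact hmono ⟨i, by omega⟩ ⟨j, hj⟩ hij)
    (by intro i hi hcon
        rw [dif_pos hi] at hcon
        exact hmne ⟨i, hi⟩ hcon)
  have ecorr : ∀ a (h : a < S.length),
      (e ⟨a, h⟩).val = if a < kT.val then a else a + 1 := by
    intro a h
    rw [← heN a h]
    exact hcorr a h
  have corr1 : ∀ a (ha : a < kT.val) (h : a < (c :: S).length),
      (RAT ⟨a, h⟩).val = (RAS ⟨a, by omega⟩).val := by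
    intro a ha h
    have h2 : e ⟨a, by omega⟩ = ⟨a, h⟩ := Fin.ext (by rw [ecorr a (by omega), if_pos ha])
    rw [← h2, hRATe]
  have corr2 : ∀ a (ha : kT.val + 1 ≤ a) (ha2 : a ≤ S.length) (h : a < (c :: S).length),
      (RAT ⟨a, h⟩).val = (RAS ⟨a - 1, by omega⟩).val := by
    intro a ha ha2 h
    have h2 : e ⟨a - 1, by omega⟩ = ⟨a, h⟩ :=
      Fin.ext (by rw [ecorr (a-1) (by omega), if_neg (by omega)]; show a - 1 + 1 = a; omega)
    rw [← h2, hRATe]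
  have hne2 : ∀ (u v : Fin S.length), u.val ≠ v.val → (RAS u).val + 1 ≠ (RAS v).val + 1 := by
    intro u v huv hcon
    exact huv (congrArg Fin.val (RAS.injective (Fin.ext (by omega))))
  intro i hi1
  constructor
  · intro hik
    have hiS : i < S.length := by omega
    have hcondT : 1 ≤ i ∧ i < (c :: S).length := ⟨hi1, by simp; omega⟩
    have hcondS : 1 ≤ i ∧ i < S.length := ⟨hi1, hiS⟩
    simp only [LCPa]
    rw [dif_pos hcondT, dif_pos hcondS]
    rw [corr1 (i-1) (by omega), corr1 i hik]
    refine lcpTS hS hc _ _ (by omega) (by omega) ((RAS _).isLt) ((RAS _).isLt) ?_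
    apply hne2
    show i - 1 ≠ i
    omega
  · intro hik
    rcases Nat.lt_or_ge i (S.length + 1) with hiT | hiT
    · have hcondT : 1 ≤ i ∧ i < (c :: S).length := ⟨hi1, by simp; omega⟩
      have hcondS : 1 ≤ i - 1 ∧ i - 1 < S.length := ⟨by omega, by omega⟩
      simp only [LCPa]
      rw [dif_pos hcondT, dif_pos hcondS]
      rw [corr2 (i-1) (by omega) (by omega), corr2 i (by omega) (by omega)]
      refine lcpTS hS hc _ _ (by omega) (by omega) ((RAS _).isLt) ((RAS _).isLt) ?_
      apply hne2
      show i - 1 - 1 ≠ i - 1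
      omega
    · simp only [LCPa]
      rw [dif_neg (by rintro ⟨h1, h2⟩; simp at h2; omega),
          dif_neg (by rintro ⟨h1, h2⟩; omega)]
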